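/- Let V be an n-dimensional real inner product space with orthonormal basis (e_1,…,e_n) and let R be an algebraic curvature tensor on V. Then for every x ∈ V, Σ_{b,i,j} R(x,e_i,e_b,e_j)·R(e_b,e_i,x,e_j) = (1/2)·Σ_{i,j,k} R(x,e_i,e_j,e_k)². -/
import Mathlib


/-- For an algebraic curvature tensor `R` on an `n`-dimensional real inner product space with
orthonormal basis `(e_1,…,e_n)`, for every `x`,
`Σ_{b,i,j} R(x,e_i,e_b,e_j)·R(e_b,e_i,x,e_j) = (1/2)·Σ_{i,j,k} R(x,e_i,e_j,e_k)²`. -/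
theorem stmt_5 (n : ℕ) (V : Type*) [NormedAddCommGroup V]
    [InnerProductSpace ℝ V] [FiniteDimensional ℝ V] (hdim : Module.finrank ℝ V = n)
    (e : OrthonormalBasis (Fin n) ℝ V)
    (R : V →ₗ[ℝ] V →ₗ[ℝ] V →ₗ[ℝ] V →ₗ[ℝ] ℝ)
    (hanti : ∀ x y z w : V, R x y z w = - R y x z w)
    (hpair : ∀ x y z w : V, R x y z w = R z w x y)
    (hbianchi : ∀ x y z w : V, R x y z w + R y z x w + R z x y w = 0) :
    ∀ x : V, (∑ b, ∑ i, ∑ j, R x (e i) (e b) (e j) * R (e b) (e i) x (e j)) =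
      (1/2) * ∑ i, ∑ j, ∑ k, (R x (e i) (e j) (e k)) ^ 2 := by
  intro x
  -- abbreviation
  let f : Fin n → Fin n → Fin n → ℝ := fun b i j => R x (e b) (e i) (e j)
  have hfold : ∀ b i j, R x (e b) (e i) (e j) = f b i j := fun _ _ _ => rfl
  -- antisymmetry in the last two slots
  have hlast : ∀ b i j : Fin n, f b j i = - f b i j := by
    intro b i j
    show R x (e b) (e j) (e i) = - R x (e b) (e i) (e j)
    rw [hpair x (e b) (e j) (e i), hanti (e j) (e i) x (e b),
      ← hpair x (e b) (e i) (e j)]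
  -- first Bianchi consequence
  have hb1 : ∀ b i j : Fin n, R (e b) (e i) x (e j) = f i b j - f b i j := by
    intro b i j
    have h := hbianchi (e b) (e i) x (e j)
    have h2 : R (e i) x (e b) (e j) = - f i b j := by
      rw [hanti (e i) x (e b) (e j)]
    have h3 : R x (e b) (e i) (e j) = f b i j := rfl
    linarith
  -- second Bianchi consequence
  have hb2 : ∀ b i j : Fin n, f i b j = f b i j - f j i b := by
    intro b i j
    have h := hbianchi x (e i) (e b) (e j)
    have h2 : R (e i) (e b) x (e j) = f j i b := by
      rw [hpair (e i) (e b) x (e j)]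
    have h3 : R (e b) x (e i) (e j) = - f b i j := by
      rw [hanti (e b) x (e i) (e j)]
    have h4 : R x (e i) (e b) (e j) = f i b j := rfl
    linarith
  -- cyclic reindexing of triple sums
  have swap_inner : ∀ F : Fin n → Fin n → Fin n → ℝ,
      (∑ a, ∑ b, ∑ c, F a b c) = ∑ a, ∑ c, ∑ b, F a b c := by
    intro F
    exact Finset.sum_congr rfl fun a _ => Finset.sum_comm
  have cyc : ∀ F : Fin n → Fin n → Fin n → ℝ,
      (∑ b, ∑ i, ∑ j, F b i j) = ∑ b, ∑ i, ∑ j, F j b i := by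
    intro F
    rw [Finset.sum_comm]
    rw [swap_inner (fun i b j => F b i j)]
  -- key cross-term identity
  have h5 : (∑ b, ∑ i, ∑ j, f j i b * f b i j)
      = ∑ b, ∑ i, ∑ j, f i b j * f b i j := by
    calc (∑ b, ∑ i, ∑ j, f j i b * f b i j)
        = ∑ b, ∑ i, ∑ j, f i b j * f j b i :=
          cyc (fun b i j => f j i b * f b i j)
      _ = ∑ b, ∑ i, ∑ j, f b j i * f i j b :=
          cyc (fun b i j => f i b j * f j b i)
      _ = ∑ b, ∑ i, ∑ j, f i b j * f b i j := by
          refine Finset.sum_congr rfl fun b _ => Finset.sum_congr rfl fun i _ =>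
            Finset.sum_congr rfl fun j _ => ?_
          rw [hlast b i j, hlast i b j]
          ring
  simp only [hfold, hb1]
  have hsplit : (∑ b, ∑ i, ∑ j, f i b j * (f i b j - f b i j))
      = (∑ b, ∑ i, ∑ j, f i b j * f i b j) - ∑ b, ∑ i, ∑ j, f i b j * f b i j := by
    simp [mul_sub, Finset.sum_sub_distrib]
  have hU : (∑ b, ∑ i, ∑ j, f i b j * f b i j)
      = (∑ b, ∑ i, ∑ j, f b i j * f b i j) - ∑ b, ∑ i, ∑ j, f i b j * f b i j := by
    calc (∑ b, ∑ i, ∑ j, f i b j * f b i j)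
        = ∑ b, ∑ i, ∑ j, (f b i j - f j i b) * f b i j := by
          refine Finset.sum_congr rfl fun b _ => Finset.sum_congr rfl fun i _ =>
            Finset.sum_congr rfl fun j _ => ?_
          rw [← hb2]
      _ = (∑ b, ∑ i, ∑ j, f b i j * f b i j) - ∑ b, ∑ i, ∑ j, f j i b * f b i j := by
          simp [sub_mul, Finset.sum_sub_distrib]
      _ = (∑ b, ∑ i, ∑ j, f b i j * f b i j) - ∑ b, ∑ i, ∑ j, f i b j * f b i j := by
          rw [h5]
  have hsq1 : (∑ b, ∑ i, ∑ j, f i b j * f i b j)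
      = ∑ b, ∑ i, ∑ j, f b i j * f b i j := by
    rw [Finset.sum_comm]
  have hsq2 : (∑ i, ∑ j, ∑ k, f i j k ^ 2)
      = ∑ b, ∑ i, ∑ j, f b i j * f b i j := by
    simp [sq]
  rw [hsplit, hsq1, hsq2]
  linarith
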